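/- For every short game G, the game values of G → ∗ → ∗ → ∗ and G → ∗ are equal. -/

import Mathlib

universe u

namespace SetTheory

/-- Pre-games (removed from Mathlib; restated with their old meaning). -/
inductive PGame : Type (u + 1)
  | mk : ∀ α β : Type u, (α → PGame) → (β → PGame) → PGame

namespace PGame

def LeftMoves : PGame → Type u
  | mk l _ _ _ => l

def RightMoves : PGame → Type u
  | mk _ r _ _ => r

def moveLeft : ∀ g : PGame, LeftMoves g → PGame
  | mk _ _ L _ => L

def moveRight : ∀ g : PGame, RightMoves g → PGame
  | mk _ _ _ R => R

instance : Zero PGame :=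
  ⟨⟨PEmpty, PEmpty, PEmpty.elim, PEmpty.elim⟩⟩

def neg : PGame → PGame
  | ⟨l, r, L, R⟩ => ⟨r, l, fun i => neg (R i), fun i => neg (L i)⟩

instance : Neg PGame :=
  ⟨neg⟩

def addAux (xl xr : Type u) (IHL : xl → PGame → PGame) (IHR : xr → PGame → PGame) :
    PGame → PGame
  | mk yl yr yL yR =>
    mk (xl ⊕ yl) (xr ⊕ yr)
      (Sum.elim (fun i => IHL i (mk yl yr yL yR)) (fun j => addAux xl xr IHL IHR (yL j)))
      (Sum.elim (fun i => IHR i (mk yl yr yL yR)) (fun j => addAux xl xr IHL IHR (yR j)))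

def add : PGame → PGame → PGame
  | mk xl xr xL xR => addAux xl xr (fun i => add (xL i)) (fun i => add (xR i))

instance : Add PGame :=
  ⟨add⟩

instance : Sub PGame :=
  ⟨fun x y => x + -y⟩

def star : PGame :=
  ⟨PUnit, PUnit, fun _ => 0, fun _ => 0⟩

/-- Auxiliary: the pair `(x ≤ y, x ⧏ y)` for fixed `x` by recursion on `y`. -/
def leLfAux (xl xr : Type u) (IHL : xl → PGame → Prop × Prop)
    (IHR : xr → PGame → Prop × Prop) : PGame → Prop × Prop
  | mk yl yr yL yR =>
    ((∀ i, (IHL i (mk yl yr yL yR)).2) ∧ ∀ j, (leLfAux xl xr IHL IHR (yR j)).2,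
     (∃ i, (leLfAux xl xr IHL IHR (yL i)).1) ∨ ∃ j, (IHR j (mk yl yr yL yR)).1)

/-- The pair `(x ≤ y, x ⧏ y)`. -/
def leLf : PGame → PGame → Prop × Prop
  | mk xl xr xL xR => leLfAux xl xr (fun i => leLf (xL i)) (fun j => leLf (xR j))

instance : LE PGame :=
  ⟨fun x y => (leLf x y).1⟩

def Equiv (x y : PGame) : Prop :=
  x ≤ y ∧ y ≤ x

instance : HasEquiv PGame :=
  ⟨Equiv⟩

class inductive Short : PGame.{u} → Type (u + 1)
  | mk :
    ∀ {α β : Type u} {L : α → PGame.{u}} {R : β → PGame.{u}} (_ : ∀ i : α, Short (L i))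
      (_ : ∀ j : β, Short (R j)) [Fintype α] [Fintype β], Short ⟨α, β, L, R⟩

end PGame

end SetTheory

open SetTheory

open scoped PGame

namespace SeqCompound

open Classical in
/-- The sequential compound `G → H` of two pregames. -/
noncomputable def seqc : PGame → PGame → PGame
  | PGame.mk α β L R, H =>
    if Nonempty α then
      if Nonempty β then
        PGame.mk α β (fun a => seqc (L a) H) (fun b => seqc (R b) H)
      else
        PGame.mk α H.RightMoves (fun a => seqc (L a) H) H.moveRight
    else
      if Nonempty β then
        PGame.mk H.LeftMoves β H.moveLeft (fun b => seqc (R b) H)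
      else H

/-- A pregame is dicotic (all-small) if in every subposition,
Left has an option iff Right has an option. -/
def Dicotic : PGame → Prop
  | PGame.mk α β L R =>
    (Nonempty α ↔ Nonempty β) ∧ (∀ a, Dicotic (L a)) ∧ (∀ b, Dicotic (R b))

/-- The canonical nonnegative integer game `{n-1 | }`. -/
def intGame : ℕ → PGame
  | 0 => 0
  | n + 1 => PGame.mk PUnit PEmpty (fun _ => intGame n) PEmpty.elim

/-- `upSum k` is the disjunctive sum `↑¹ + ↑² + ⋯ + ↑ᵏ`. -/
def upSum : ℕ → PGame
  | 0 => 0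
  | k + 1 => upSum k +
      PGame.mk PUnit PUnit (fun _ => 0) (fun _ => PGame.star - upSum k)

/-- `upPow k` is the game `↑^(k+1) = {0 | ∗ - (↑¹ + ⋯ + ↑ᵏ)}`. -/
def upPow (k : ℕ) : PGame :=
  PGame.mk PUnit PUnit (fun _ => 0) (fun _ => PGame.star - upSum k)

/-- Sequential compound of a list of games. -/
noncomputable def seqList : List PGame → PGame
  | [] => 0
  | G :: l => seqc G (seqList l)

end SeqCompound

namespace SeqCompound

lemma leLf_mk_eq {xl xr : Type _} (xL : xl → PGame) (xR : xr → PGame) (y : PGame) :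
    PGame.leLf (PGame.mk xl xr xL xR) y
      = PGame.leLfAux xl xr (fun i => PGame.leLf (xL i)) (fun j => PGame.leLf (xR j)) y := by
  rw [PGame.leLf]

lemma leLfAux_mk_eq (xl xr : Type _) (IHL : xl → PGame → Prop × Prop)
    (IHR : xr → PGame → Prop × Prop) {yl yr : Type _} (yL : yl → PGame) (yR : yr → PGame) :
    PGame.leLfAux xl xr IHL IHR (PGame.mk yl yr yL yR)
      = ((∀ i, (IHL i (PGame.mk yl yr yL yR)).2) ∧ ∀ j, (PGame.leLfAux xl xr IHL IHR (yR j)).2,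
         (∃ i, (PGame.leLfAux xl xr IHL IHR (yL i)).1) ∨
           ∃ j, (IHR j (PGame.mk yl yr yL yR)).1) := by
  rw [PGame.leLfAux]

lemma lf_of_le_moveLeft' (x : PGame) {yl yr : Type _} (yL : yl → PGame) (yR : yr → PGame)
    (i : yl) (h : (PGame.leLf x (yL i)).1) : (PGame.leLf x (PGame.mk yl yr yL yR)).2 := by
  cases x with
  | mk xl xr xL xR =>
    rw [leLf_mk_eq, leLfAux_mk_eq]
    rw [leLf_mk_eq] at h
    exact Or.inl ⟨i, h⟩

lemma lf_of_moveRight_le' {xl xr : Type _} (xL : xl → PGame) (xR : xr → PGame) (y : PGame)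
    (j : xr) (h : (PGame.leLf (xR j) y).1) : (PGame.leLf (PGame.mk xl xr xL xR) y).2 := by
  cases y with
  | mk yl yr yL yR =>
    rw [leLf_mk_eq, leLfAux_mk_eq]
    exact Or.inr ⟨j, h⟩

lemma le_of_mk' {xl xr : Type _} (xL : xl → PGame) (xR : xr → PGame)
    {yl yr : Type _} (yL : yl → PGame) (yR : yr → PGame)
    (hL : ∀ i, (PGame.leLf (xL i) (PGame.mk yl yr yL yR)).2)
    (hR : ∀ j, (PGame.leLf (PGame.mk xl xr xL xR) (yR j)).2) :
    PGame.mk xl xr xL xR ≤ PGame.mk yl yr yL yR := by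
  show (PGame.leLf _ _).1
  rw [leLf_mk_eq, leLfAux_mk_eq]
  refine ⟨hL, fun j => ?_⟩
  have := hR j
  rw [leLf_mk_eq] at this
  exact this

lemma equiv_of_equiv' {x y : PGame} (eL : x.LeftMoves ≃ y.LeftMoves)
    (eR : x.RightMoves ≃ y.RightMoves)
    (hL : ∀ i, x.moveLeft i ≈ y.moveLeft (eL i))
    (hR : ∀ j, x.moveRight j ≈ y.moveRight (eR j)) : x ≈ y := by
  cases x with
  | mk xl xr xL xR =>
  cases y with
  | mk yl yr yL yR =>
  constructor
  · refine le_of_mk' _ _ _ _ (fun i => lf_of_le_moveLeft' _ _ _ (eL i) (hL i).1) (fun j => ?_)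
    obtain ⟨j', rfl⟩ := eR.surjective j
    exact lf_of_moveRight_le' _ _ _ j' (hR j').1
  · refine le_of_mk' _ _ _ _ (fun i => ?_) (fun j => lf_of_moveRight_le' _ _ _ (eR j) (hR j).2)
    obtain ⟨i', rfl⟩ := eL.surjective i
    exact lf_of_le_moveLeft' _ _ _ i' (hL i').2

lemma zero_le_zero' : (0 : PGame) ≤ 0 := by
  show PGame.mk PEmpty PEmpty PEmpty.elim PEmpty.elim ≤ PGame.mk PEmpty PEmpty PEmpty.elim PEmpty.elim
  exact le_of_mk' _ _ _ _ (fun i => PEmpty.elim i) (fun j => PEmpty.elim j)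

end SeqCompound

namespace SeqCompound

lemma seqc_zero (H : PGame) : seqc 0 H = H := by
  show seqc (PGame.mk PEmpty PEmpty _ _) H = H
  rw [seqc]
  simp

lemma seqc_star (H : PGame) :
    seqc PGame.star H = PGame.mk PUnit PUnit (fun _ => H) (fun _ => H) := by
  show seqc (PGame.mk PUnit PUnit _ _) H = _
  rw [seqc, if_pos ⟨PUnit.unit⟩, if_pos ⟨PUnit.unit⟩]
  simp [seqc_zero]

lemma starstar_equiv_zero :
    (PGame.mk PUnit PUnit (fun _ => PGame.star) (fun _ => PGame.star)) ≈ (0 : PGame) := by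
  constructor
  · show PGame.mk PUnit PUnit (fun _ => PGame.star) (fun _ => PGame.star)
      ≤ PGame.mk PEmpty PEmpty PEmpty.elim PEmpty.elim
    exact le_of_mk' _ _ _ _
      (fun _ => lf_of_moveRight_le' (fun _ => (0 : PGame)) (fun _ => (0 : PGame)) _ PUnit.unit
        zero_le_zero')
      (fun j => PEmpty.elim j)
  · show PGame.mk PEmpty PEmpty PEmpty.elim PEmpty.elim
      ≤ PGame.mk PUnit PUnit (fun _ => PGame.star) (fun _ => PGame.star)
    exact le_of_mk' _ _ _ _ (fun i => PEmpty.elim i)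
      (fun _ => lf_of_le_moveLeft' _ (fun _ => (0 : PGame)) (fun _ => (0 : PGame)) PUnit.unit
        zero_le_zero')

lemma seqc_congr {H H' : PGame} (eL : H.LeftMoves ≃ H'.LeftMoves)
    (eR : H.RightMoves ≃ H'.RightMoves)
    (hL : ∀ i, H.moveLeft i ≈ H'.moveLeft (eL i))
    (hR : ∀ j, H.moveRight j ≈ H'.moveRight (eR j)) :
    ∀ G : PGame, seqc G H ≈ seqc G H'
  | PGame.mk α β L R => by
    rw [seqc, seqc]
    by_cases hα : Nonempty α <;> by_cases hβ : Nonempty β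
    · rw [if_pos hα, if_pos hβ, if_pos hα, if_pos hβ]
      exact equiv_of_equiv' (Equiv.refl α) (Equiv.refl β)
        (fun a => seqc_congr eL eR hL hR (L a)) (fun b => seqc_congr eL eR hL hR (R b))
    · rw [if_pos hα, if_neg hβ, if_pos hα, if_neg hβ]
      exact equiv_of_equiv' (Equiv.refl α) eR
        (fun a => seqc_congr eL eR hL hR (L a)) hR
    · rw [if_neg hα, if_pos hβ, if_neg hα, if_pos hβ]
      exact equiv_of_equiv' eL (Equiv.refl β)
        hL (fun b => seqc_congr eL eR hL hR (R b))
    · rw [if_neg hα, if_neg hβ, if_neg hα, if_neg hβ]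
      exact equiv_of_equiv' eL eR hL hR

end SeqCompound

open SeqCompound in
/-- `G → ∗ → ∗ → ∗ = G → ∗` as game values. -/
theorem seqc_three_stars (G : PGame) [PGame.Short G] :
    seqc G (seqc PGame.star (seqc PGame.star PGame.star)) ≈ seqc G PGame.star := by
  rw [seqc_star, seqc_star]
  have hstar : PGame.star = PGame.mk PUnit PUnit (fun _ => 0) (fun _ => 0) := rfl
  conv_rhs => rw [hstar]
  refine seqc_congr ?_ ?_ ?_ ?_ G
  exacts [Equiv.refl PUnit, Equiv.refl PUnit,
    fun _ => starstar_equiv_zero, fun _ => starstar_equiv_zero]
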